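/- Let q ≥ 1 and let S be a finite set of words over the alphabet Σ = {x_1, …, x_q} such that S^† is co-finite, and let n be the length of a longest word in S. Then every word over Σ of length strictly greater than (2q−1)n² − (5q−2)n + 3q − 2 belongs to S^†; equivalently, the length of a longest word not in S^† is at most (2q−1)n² − (5q−2)n + 3q − 2. -/

import Mathlib

/-- `Shuffle u v w` means that the word `w` is an interleaving (shuffle) of the
words `u` and `v`. -/
inductive Shuffle {α : Type*} : List α → List α → List α → Prop
  | nil : Shuffle [] [] []
  | left {a : α} {u v w : List α} : Shuffle u v w → Shuffle (a :: u) v (a :: w)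
  | right {a : α} {u v w : List α} : Shuffle u v w → Shuffle u (a :: v) (a :: w)

/-- `IterShuffle S y` means `y` belongs to the iterated shuffle `S^†`, i.e. `y`
can be obtained by shuffling together finitely many (possibly zero) words of `S`. -/
inductive IterShuffle {α : Type*} (S : Set (List α)) : List α → Prop
  | nil : IterShuffle S []
  | step {u w y : List α} : u ∈ S → IterShuffle S w → Shuffle u w y → IterShuffle S y

namespace AuxProof

open List

variable {α : Type*}

lemma shuffle_length {u v w : List α} (h : Shuffle u v w) :
    u.length + v.length = w.length := by
  induction h with
  | nil => simp
  | left h ih => simp only [length_cons]; omega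
  | right h ih => simp only [length_cons]; omega

lemma shuffle_count [DecidableEq α] {u v w : List α} (h : Shuffle u v w) (x : α) :
    count x u + count x v = count x w := by
  induction h with
  | nil => simp
  | left h ih => simp only [count_cons]; omega
  | right h ih => simp only [count_cons]; omega

lemma shuffle_sublist_left {u v w : List α} (h : Shuffle u v w) : u <+ w := by
  induction h with
  | nil => exact Sublist.refl _
  | left h ih => exact ih.cons₂ _
  | right h ih => exact ih.cons _

lemma shuffle_sublist_right {u v w : List α} (h : Shuffle u v w) : v <+ w := by
  induction h with
  | nil => exact Sublist.refl _
  | left h ih => exact ih.cons _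
  | right h ih => exact ih.cons₂ _

lemma exists_shuffle_of_sublist {u y : List α} (h : u <+ y) : ∃ w, Shuffle u w y := by
  induction h with
  | slnil => exact ⟨[], Shuffle.nil⟩
  | cons a h ih => obtain ⟨w, hw⟩ := ih; exact ⟨a :: w, hw.right⟩
  | cons_cons a h ih => obtain ⟨w, hw⟩ := ih; exact ⟨w, hw.left⟩

/-- From an iterated shuffle containing a letter, extract a member of `S`
containing that letter, as a sublist. -/
lemma exists_piece [DecidableEq α] {S : Set (List α)} {y : List α}
    (h : IterShuffle S y) (x : α) (hx : 1 ≤ count x y) :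
    ∃ u ∈ S, u <+ y ∧ 1 ≤ count x u := by
  induction h with
  | nil => simp at hx
  | @step u w y hu hw hsh ih =>
    have hc := shuffle_count hsh x
    by_cases h1 : 1 ≤ count x u
    · exact ⟨u, hu, shuffle_sublist_left hsh, h1⟩
    · have : 1 ≤ count x w := by omega
      obtain ⟨u', hu', hsub, hcnt⟩ := ih this
      exact ⟨u', hu', hsub.trans (shuffle_sublist_right hsh), hcnt⟩

/-- Representability by sums of elements of `E`. -/
def Rep (E : Set ℕ) (k : ℕ) : Prop :=
  ∃ l : List ℕ, (∀ e ∈ l, e ∈ E) ∧ l.sum = k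

lemma rep_zero (E : Set ℕ) : Rep E 0 := ⟨[], by simp, rfl⟩

lemma rep_add {E : Set ℕ} {k k' : ℕ} (h : Rep E k) (h' : Rep E k') : Rep E (k + k') := by
  obtain ⟨l, hl, hs⟩ := h; obtain ⟨l', hl', hs'⟩ := h'
  exact ⟨l ++ l', by intro e he; rcases mem_append.1 he with h | h; exacts [hl e h, hl' e h],
    by simp [hs, hs']⟩

lemma rep_mul {E : Set ℕ} {a : ℕ} (ha : a ∈ E) (t : ℕ) : Rep E (t * a) :=
  ⟨replicate t a, by intro e he; rw [eq_of_mem_replicate he]; exact ha, by simp [mul_comm]⟩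

lemma rep_peel {E : Set ℕ} {k : ℕ} (h : Rep E k) (hk : k ≠ 0) :
    ∃ e ∈ E, ∃ r, Rep E r ∧ k = e + r := by
  obtain ⟨l, hl, hs⟩ := h
  cases l with
  | nil => simp at hs; omega
  | cons e l' =>
    exact ⟨e, hl e (by simp), l'.sum, ⟨l', fun x hx => hl x (by simp [hx]), rfl⟩, by simp [← hs]⟩

lemma rep_elt {E : Set ℕ} {k : ℕ} (h : Rep E k) (hk : k ≠ 0) : ∃ e, e ∈ E := by
  obtain ⟨e, he, _⟩ := rep_peel h hk; exact ⟨e, he⟩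

/-- Pigeonhole: any list of at least `a ≥ 1` naturals contains a nonempty
consecutive block of length at most `a` whose sum is divisible by `a`. -/
lemma exists_block {a : ℕ} (ha : 1 ≤ a) (l : List ℕ) (hl : a ≤ l.length) :
    ∃ l₁ l₂ l₃, l = l₁ ++ l₂ ++ l₃ ∧ l₂ ≠ [] ∧ l₂.length ≤ a ∧ a ∣ l₂.sum := by
  have hmap : ∀ i ∈ Finset.range (a + 1), ((l.take i).sum % a) ∈ Finset.range a := by
    intro i _
    exact Finset.mem_range.2 (Nat.mod_lt _ ha)
  obtain ⟨i, hi, j, hj, hij, heq⟩ :=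
    Finset.exists_ne_map_eq_of_card_lt_of_maps_to (by simp) hmap
  clear hmap
  have key : ∀ i j : ℕ, i < j → j ≤ a → (l.take i).sum % a = (l.take j).sum % a →
      ∃ l₁ l₂ l₃, l = l₁ ++ l₂ ++ l₃ ∧ l₂ ≠ [] ∧ l₂.length ≤ a ∧ a ∣ l₂.sum := by
    intro i j hlt hja heq'
    have h0 : (l.take j).take i = l.take i := by
      rw [List.take_take]; congr 1; omega
    have h1 : l.take i ++ (l.take j).drop i = l.take j := by
      rw [← h0, List.take_append_drop]
    have hlen : ((l.take j).drop i).length = j - i := by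
      simp only [List.length_drop, List.length_take]
      omega
    refine ⟨l.take i, (l.take j).drop i, l.drop j, ?_, ?_, ?_, ?_⟩
    · rw [h1, List.take_append_drop]
    · intro hnil
      rw [hnil] at hlen
      simp at hlen
      omega
    · omega
    · have h2 : (l.take i).sum + ((l.take j).drop i).sum = (l.take j).sum := by
        rw [← List.sum_append, h1]
      have hle : (l.take i).sum ≤ (l.take j).sum := by omega
      have hdvd : a ∣ (l.take j).sum - (l.take i).sum :=
        (Nat.modEq_iff_dvd' hle).1 heq'
      have h3 : (l.take j).sum - (l.take i).sum = ((l.take j).drop i).sum := by omega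
      rwa [h3] at hdvd
  rcases lt_or_gt_of_ne hij with hlt | hlt
  · exact key i j hlt (by have := Finset.mem_range.1 hj; omega) heq
  · exact key j i hlt (by have := Finset.mem_range.1 hi; omega) heq.symm

/-- Remainder extraction: from any list of elements, one can remove blocks with
sum divisible by `a` until fewer than `a` elements remain. -/
lemma exists_rest {a : ℕ} (ha : 1 ≤ a) :
    ∀ (N : ℕ) (l : List ℕ), l.length ≤ N →
    ∃ rl : List ℕ, (∀ x ∈ rl, x ∈ l) ∧ rl.length < a ∧ rl.sum ≤ l.sum ∧
      a ∣ l.sum - rl.sum := by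
  intro N
  induction N with
  | zero =>
    intro l hl
    have : l = [] := by
      cases l with
      | nil => rfl
      | cons x l' => simp at hl
    subst this
    exact ⟨[], by simp, ha, le_refl _, by simp⟩
  | succ N ih =>
    intro l hl
    by_cases hlen : l.length < a
    · exact ⟨l, fun x hx => hx, hlen, le_refl _, by simp⟩
    · push_neg at hlen
      obtain ⟨l₁, l₂, l₃, hdec, hne, hl2len, hdvd⟩ := exists_block ha l hlen
      have hlen2 : 1 ≤ l₂.length := by
        cases l₂ with
        | nil => simp at hne
        | cons x l' => simp
      have hlen13 : (l₁ ++ l₃).length ≤ N := by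
        have := congrArg List.length hdec
        simp at this ⊢
        omega
      obtain ⟨rl, hmem, hrlen, hrsum, hrdvd⟩ := ih (l₁ ++ l₃) hlen13
      refine ⟨rl, ?_, hrlen, ?_, ?_⟩
      · intro x hx
        have := hmem x hx
        rw [hdec]
        simp at this ⊢
        tauto
      · have : l.sum = (l₁ ++ l₃).sum + l₂.sum := by
          rw [hdec]; simp; ring
        omega
      · have hsum : l.sum = (l₁ ++ l₃).sum + l₂.sum := by
          rw [hdec]; simp; ring
        have h1 : l.sum - rl.sum = ((l₁ ++ l₃).sum - rl.sum) + l₂.sum := by omega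
        rw [h1]
        exact Nat.dvd_add hrdvd hdvd

/-- Schur-type bound: if all elements of `E` lie in `[1, n]` and every number
from `M` on is representable, then every number `≥ (n-1)*(n-2)` is representable. -/
lemma rep_large {E : Set ℕ} {n M : ℕ} (hE : ∀ e ∈ E, 1 ≤ e ∧ e ≤ n)
    (htail : ∀ k, M ≤ k → Rep E k) :
    ∀ k, (n - 1) * (n - 2) ≤ k → Rep E k := by
  intro k hk
  obtain ⟨e₀, he₀⟩ := rep_elt (htail (M + 1) (by omega)) (by omega)
  have hE0 := hE e₀ he₀
  have hEne : E.Nonempty := ⟨e₀, he₀⟩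
  obtain ⟨a, haE, hamin⟩ : ∃ a, a ∈ E ∧ ∀ e ∈ E, a ≤ e :=
    ⟨sInf E, Nat.sInf_mem hEne, fun e he => Nat.sInf_le he⟩
  have ha1 : 1 ≤ a := (hE a haE).1
  have han : a ≤ n := (hE a haE).2
  by_cases ha_eq : a = 1
  · exact ⟨List.replicate k 1, by
      intro e he; rw [List.eq_of_mem_replicate he, ← ha_eq]; exact haE, by simp⟩
  -- a ≥ 2
  have ha2 : 2 ≤ a := by omega
  have han1 : a ≤ n - 1 := by
    by_contra hc
    push_neg at hc
    -- a = n, E = {n}, every Rep number divisible by n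
    have haEn : a = n := by omega
    have hall : ∀ e ∈ E, e = a := by
      intro e he
      have h1 := (hE e he).2
      have h2 := hamin e he
      omega
    have hdvd : ∀ x, Rep E x → a ∣ x := by
      intro x hx
      obtain ⟨l, hl, hs⟩ := hx
      have : l.sum = l.length * a := by
        clear hs
        induction l with
        | nil => simp
        | cons e l' ihl =>
          simp only [List.sum_cons, List.length_cons]
          rw [hall e (hl e (by simp)), ihl (fun x hx => hl x (by simp [hx]))]
          ring
      exact ⟨l.length, by rw [← hs, this]; ring⟩
    have d1 := hdvd M (htail M (le_refl _))
    have d2 := hdvd (M + 1) (htail (M + 1) (by omega))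
    have h1 : a ∣ 1 := (Nat.dvd_add_right d1).mp d2
    have := Nat.le_of_dvd one_pos h1
    omega
  have hn3 : 3 ≤ n := by omega
  have hk' : (a - 1) * (n - 1) ≤ k := by
    calc (a - 1) * (n - 1) ≤ (n - 2) * (n - 1) := by
          apply Nat.mul_le_mul_right; omega
    _ = (n - 1) * (n - 2) := by ring
    _ ≤ k := hk
  -- use K = k + a * M
  obtain ⟨l, hl, hs⟩ := htail (k + a * M) (by nlinarith)
  obtain ⟨rl, hmem, hrlen, hrsum, hrdvd⟩ := exists_rest ha1 l.length l (le_refl _)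
  have hrE : ∀ x ∈ rl, x ∈ E := fun x hx => hl x (hmem x hx)
  have hrbound : rl.sum ≤ (a - 1) * n := by
    calc rl.sum ≤ rl.length * n := List.sum_le_card_nsmul rl n (fun x hx => (hE x (hrE x hx)).2)
    _ ≤ (a - 1) * n := by apply Nat.mul_le_mul_right; omega
  have hdvd2 : a ∣ (k + a * M) - rl.sum := by rwa [hs] at hrdvd
  have hrk : rl.sum ≤ k := by
    by_contra hc
    push_neg at hc
    -- then a ∣ rl.sum - k and positive
    have hklow : a ∣ rl.sum - k := by
      have h1 : (k + a * M) - rl.sum + (rl.sum - k) = a * M := by omega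
      have h2 : a ∣ (k + a * M) - rl.sum + (rl.sum - k) := ⟨M, by omega⟩
      exact (Nat.dvd_add_right hdvd2).mp (h1 ▸ h2)
    have : a ≤ rl.sum - k := Nat.le_of_dvd (by omega) hklow
    -- rl.sum ≥ k + a ≥ (a-1)(n-1) + a = (a-1)n + 1 > (a-1) n
    have hup : (a - 1) * (n - 1) + a ≤ rl.sum := by omega
    have hid : (a - 1) * (n - 1) + a = (a - 1) * n + 1 := by
      obtain ⟨a', ha'⟩ : ∃ a', a = a' + 2 := ⟨a - 2, by omega⟩
      obtain ⟨n', hn'⟩ : ∃ n', n = n' + 3 := ⟨n - 3, by omega⟩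
      subst ha' hn'
      have e1 : a' + 2 - 1 = a' + 1 := rfl
      have e2 : n' + 3 - 1 = n' + 2 := rfl
      rw [e1, e2]
      ring
    omega
  have hdvd3 : a ∣ k - rl.sum := by
    have h1 : (k + a * M) - rl.sum = a * M + (k - rl.sum) := by omega
    rw [h1] at hdvd2
    exact (Nat.dvd_add_right ⟨M, rfl⟩).mp hdvd2
  obtain ⟨t, ht⟩ := hdvd3
  have : Rep E (k - rl.sum) := ht ▸ (by
    have := rep_mul haE t
    rwa [mul_comm] at this)
  have := rep_add ⟨rl, hrE, rfl⟩ this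
  have hfin : rl.sum + (k - rl.sum) = k := by omega
  rwa [hfin] at this

/-- Gap lemma: down from any `v`, at distance at most `e₀ - 1` there is a
representable number. -/
lemma rep_gap {E : Set ℕ} {e₀ : ℕ} (he₀ : e₀ ∈ E) (he₀1 : 1 ≤ e₀) (v : ℕ) :
    ∃ t r, Rep E r ∧ v = t + r ∧ t ≤ v ∧ t + 1 ≤ e₀ := by
  classical
  have hgrep : Rep E (Nat.findGreatest (Rep E) v) :=
    Nat.findGreatest_spec (m := 0) (Nat.zero_le v) (rep_zero E)
  have hgle : Nat.findGreatest (Rep E) v ≤ v := Nat.findGreatest_le v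
  set g := Nat.findGreatest (Rep E) v with hg_def
  refine ⟨v - g, g, hgrep, by omega, by omega, ?_⟩
  by_contra hc
  push_neg at hc
  have h1 : g + e₀ ≤ v := by omega
  have h2 : Rep E (g + e₀) := rep_add hgrep (by
    have := rep_mul he₀ 1; simpa using this)
  have h3 : g + e₀ ≤ g := Nat.le_findGreatest h1 h2
  omega

/-- An iterated shuffle that is a power of a single letter must decompose into
unary words of `S`. -/
lemma rep_of_unary [DecidableEq α] {S : Set (List α)} {y : List α}
    (h : IterShuffle S y) (c : α) (hy : ∀ x ∈ y, x = c) :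
    Rep {e | 1 ≤ e ∧ List.replicate e c ∈ S} y.length := by
  induction h with
  | nil => simpa using rep_zero _
  | @step u w y hu hw hsh ih =>
    have hus : u <+ y := shuffle_sublist_left hsh
    have hws : w <+ y := shuffle_sublist_right hsh
    have huc : ∀ x ∈ u, x = c := fun x hx => hy x (hus.subset hx)
    have hwc : ∀ x ∈ w, x = c := fun x hx => hy x (hws.subset hx)
    have hlen := shuffle_length hsh
    have hrw := ih hwc
    by_cases hu0 : u.length = 0
    · have : y.length = w.length := by omega
      rwa [this]
    · have hrep_u : u.length ∈ {e | 1 ≤ e ∧ List.replicate e c ∈ S} := by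
        constructor
        · omega
        · have : u = List.replicate u.length c := List.eq_replicate_length.mpr huc
          rwa [← this]
      have : Rep {e | 1 ≤ e ∧ List.replicate e c ∈ S} (u.length + w.length) :=
        rep_add ⟨[u.length], by simpa using hrep_u, by simp⟩ hrw
      rwa [hlen] at this

lemma length_eq_sum_count [DecidableEq α] [Fintype α] (y : List α) :
    y.length = ∑ c, List.count c y := by
  induction y with
  | nil => simp
  | cons a l ih =>
    simp only [List.length_cons, List.count_cons, ih, Finset.sum_add_distrib]
    have h1 : (∑ x : α, if (x == a) = true then 1 else 0) = 1 := by
      simp [beq_iff_eq]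
    have h2 : (∑ x : α, if (a == x) = true then 1 else 0) = 1 := by
      simp [beq_iff_eq]
    omega

/-- Phase 2: if every letter count is representable by unary words of `S`,
the word is an iterated shuffle. -/
lemma iterShuffle_of_rep [DecidableEq α] {S : Set (List α)} {E : α → Set ℕ}
    (hE : ∀ c e, e ∈ E c → 1 ≤ e ∧ List.replicate e c ∈ S) :
    ∀ (N : ℕ) (y : List α), y.length ≤ N → (∀ c, Rep (E c) (List.count c y)) →
    IterShuffle S y := by
  intro N
  induction N with
  | zero =>
    intro y hy _
    have : y = [] := by cases y with
      | nil => rfl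
      | cons a l => simp at hy
    rw [this]; exact IterShuffle.nil
  | succ N ih =>
    intro y hy hrep
    cases hye : y with
    | nil => exact IterShuffle.nil
    | cons a l =>
      subst hye
      have hcnt : 1 ≤ List.count a (a :: l) := by simp
      have hra := hrep a
      obtain ⟨e, heE, r, hrr, hsum⟩ := rep_peel hra (by omega)
      have ⟨he1, heS⟩ := hE a e heE
      have hsub : List.replicate e a <+ (a :: l) :=
        List.replicate_sublist_iff.mpr (by omega)
      obtain ⟨w, hw⟩ := exists_shuffle_of_sublist hsub
      have hlen := shuffle_length hw
      have hwcnt := fun x => shuffle_count hw x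
      apply IterShuffle.step heS _ hw
      have hwlen : w.length ≤ N := by
        simp only [List.length_replicate, List.length_cons] at hlen hy
        omega
      apply ih w hwlen
      intro c
      by_cases hc : c = a
      · subst hc
        have h2 := hwcnt c
        have h0 : List.count c (List.replicate e c) = e := List.count_replicate_self ..
        rw [h0] at h2
        have h3 : List.count c w = r := by omega
        rwa [h3]
      · have h2 := hwcnt c
        have h0 : List.count c (List.replicate e a) = 0 := by
          apply List.count_eq_zero.mpr
          simp [List.mem_replicate]
          tauto
        rw [h0] at h2
        have h3 : List.count c w = List.count c (a :: l) := by omega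
        rw [h3]
        exact hrep c

/-- Single-move lemma: remove one occurrence of `b` together with some `c`'s
using a word of `S` of shape `c^i b` or `b c^j`. -/
lemma single_move [DecidableEq α] {S : Set (List α)} {b c : α} (hbc : b ≠ c) {i j : ℕ}
    (h1 : (List.replicate i c ++ [b]) ∈ S) (h2 : (b :: List.replicate j c) ∈ S)
    {y : List α} (hb : 1 ≤ List.count b y) (hc : i + j ≤ List.count c y) :
    ∃ u ∈ S, ∃ w, Shuffle u w y ∧ List.count b w + 1 = List.count b y ∧
      (List.count c w + i = List.count c y ∨ List.count c w + j = List.count c y) ∧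
      (∀ x, x ≠ b → x ≠ c → List.count x w = List.count x y) := by
  have hbmem : b ∈ y := List.count_pos_iff.mp (by omega)
  obtain ⟨y₁, y₂, hy⟩ := List.append_of_mem hbmem
  subst hy
  have hcb : c ≠ b := fun h => hbc h.symm
  have hcsplit : List.count c y₁ + List.count c y₂ = List.count c (y₁ ++ b :: y₂) := by
    simp [List.count_append, List.count_cons_of_ne hbc]
  have ebr : List.count b (List.replicate i c) = 0 :=
    List.count_eq_zero.mpr (by simp [List.mem_replicate]; tauto)
  have ebr' : List.count b (List.replicate j c) = 0 :=
    List.count_eq_zero.mpr (by simp [List.mem_replicate]; tauto)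
  have key : ∀ u, u ∈ S → u <+ (y₁ ++ b :: y₂) → List.count b u = 1 →
      (List.count c u = i ∨ List.count c u = j) →
      (∀ x, x ≠ b → x ≠ c → List.count x u = 0) →
      ∃ u ∈ S, ∃ w, Shuffle u w (y₁ ++ b :: y₂) ∧
        List.count b w + 1 = List.count b (y₁ ++ b :: y₂) ∧
      (List.count c w + i = List.count c (y₁ ++ b :: y₂) ∨
        List.count c w + j = List.count c (y₁ ++ b :: y₂)) ∧
      (∀ x, x ≠ b → x ≠ c → List.count x w = List.count x (y₁ ++ b :: y₂)) := by
    intro u huS husub hub huc hux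
    obtain ⟨w, hw⟩ := exists_shuffle_of_sublist husub
    refine ⟨u, huS, w, hw, ?_, ?_, ?_⟩
    · have := shuffle_count hw b; omega
    · have := shuffle_count hw c
      rcases huc with h | h
      · left; omega
      · right; omega
    · intro x hxb hxc
      have := shuffle_count hw x
      have := hux x hxb hxc
      omega
  by_cases hcase : i ≤ List.count c y₁
  · apply key (List.replicate i c ++ [b]) h1
    · exact (List.replicate_sublist_iff.mpr hcase).append (by simp)
    · rw [List.count_append, ebr]
      simp
    · left
      rw [List.count_append, List.count_replicate_self]
      have : List.count c [b] = 0 := by simp [List.count_singleton, hbc]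
      omega
    · intro x hxb hxc
      rw [List.count_append]
      have e1 : List.count x (List.replicate i c) = 0 :=
        List.count_eq_zero.mpr (by simp [List.mem_replicate]; tauto)
      have e2 : List.count x [b] = 0 := by simp [List.count_singleton, hxb.symm]
      omega
  · have hcase2 : j ≤ List.count c y₂ := by omega
    apply key (b :: List.replicate j c) h2
    · have h3 : (b :: List.replicate j c) <+ (b :: y₂) :=
        (List.replicate_sublist_iff.mpr hcase2).cons₂ b
      exact h3.trans (List.sublist_append_right y₁ (b :: y₂))
    · rw [List.count_cons_self, ebr']
    · right
      rw [List.count_cons_of_ne hbc, List.count_replicate_self]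
    · intro x hxb hxc
      rw [List.count_cons_of_ne hxb.symm]
      exact List.count_eq_zero.mpr (by simp [List.mem_replicate]; tauto)

/-- Forced pair words: for distinct letters `b, c`, `S` must contain words of
shape `c^i b` and `b c^j`. -/
lemma pair_words [DecidableEq α] {S : Set (List α)} {M n : ℕ}
    (hM : ∀ z : List α, M ≤ z.length → IterShuffle S z)
    (hmax : ∀ w ∈ S, w.length ≤ n)
    (b c : α) (hbc : b ≠ c) :
    ∃ i j, i + 1 ≤ n ∧ j + 1 ≤ n ∧ (List.replicate i c ++ [b]) ∈ S ∧
      (b :: List.replicate j c) ∈ S := by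
  have hbr : ∀ m : ℕ, List.count b (List.replicate m c) = 0 := fun m =>
    List.count_eq_zero.mpr (by simp [List.mem_replicate]; tauto)
  -- left word
  have hz₀ : IterShuffle S (List.replicate M c ++ [b]) := hM _ (by simp)
  have hcnt₀ : 1 ≤ List.count b (List.replicate M c ++ [b]) := by
    rw [List.count_append, hbr]; simp
  obtain ⟨u, huS, husub, hub⟩ := exists_piece hz₀ b hcnt₀
  obtain ⟨u₁, u₂, hu12, hu1, hu2⟩ := List.sublist_append_iff.mp husub
  have hu1rep : u₁ = List.replicate u₁.length c :=
    List.eq_replicate_length.mpr (fun x hx => List.eq_of_mem_replicate (hu1.subset hx))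
  rcases List.sublist_singleton.mp hu2 with h2 | h2
  · exfalso
    rw [hu12, h2, List.append_nil, hu1rep, hbr] at hub
    omega
  have huform : u = List.replicate u₁.length c ++ [b] := by
    rw [hu12, h2, ← hu1rep]
  have hulen : u₁.length + 1 ≤ n := by
    have := hmax u huS
    rw [huform] at this
    simpa using this
  -- right word
  have hz₁ : IterShuffle S (b :: List.replicate M c) := hM _ (by simp)
  have hcnt₁ : 1 ≤ List.count b (b :: List.replicate M c) := by simp
  obtain ⟨v, hvS, hvsub, hvb⟩ := exists_piece hz₁ b hcnt₁
  rcases List.sublist_cons_iff.mp hvsub with h3 | ⟨v', hv', hv'sub⟩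
  · exfalso
    have : v = List.replicate v.length c :=
      List.eq_replicate_length.mpr (fun x hx => List.eq_of_mem_replicate (h3.subset hx))
    rw [this, hbr] at hvb
    omega
  · have hv'rep : v' = List.replicate v'.length c :=
      List.eq_replicate_length.mpr (fun x hx => List.eq_of_mem_replicate (hv'sub.subset hx))
    have hvform : v = b :: List.replicate v'.length c := by rw [hv', ← hv'rep]
    have hvlen : v'.length + 1 ≤ n := by
      have := hmax v hvS
      rw [hvform] at this
      simpa using this
    exact ⟨u₁.length, v'.length, hulen, hvlen,
      huform ▸ huS, hvform ▸ hvS⟩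

/-- Phase 1: the main inductive absorption argument. -/
lemma main_P1 [DecidableEq α] [Fintype α] {S : Set (List α)} {E : α → Set ℕ} {m : ℕ}
    (hm : 2 ≤ m)
    (hE : ∀ c e, e ∈ E c → 1 ≤ e ∧ List.replicate e c ∈ S)
    (hRepBig : ∀ c k, m * m - m ≤ k → Rep (E c) k)
    (hPair : ∀ b c : α, b ≠ c → ∃ i j, i ≤ m ∧ j ≤ m ∧
      (List.replicate i c ++ [b]) ∈ S ∧ (b :: List.replicate j c) ∈ S) :
    ∀ (D : ℕ) (y : List α) (t σ : α → ℕ),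
      (∑ c, t c) ≤ D → (∑ c, t c) ≤ (∑ c, σ c) →
      (∀ c, (σ c = 0 ∧ ∃ r, Rep (E c) r ∧ List.count c y = t c + r)
          ∨ (t c = 0 ∧ m * σ c + (m * m - m) ≤ List.count c y)) →
      IterShuffle S y := by
  intro D
  induction D with
  | zero =>
    intro y t σ htD _ hinv
    have ht0 : ∀ c, t c = 0 := by
      intro c
      have h1 : t c ≤ ∑ c, t c :=
        Finset.single_le_sum (f := t) (fun i _ => Nat.zero_le _) (Finset.mem_univ c)
      omega
    apply iterShuffle_of_rep hE y.length y (le_refl _)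
    intro c
    rcases hinv c with ⟨_, r, hr, hcnt⟩ | ⟨_, hcnt⟩
    · rw [ht0 c] at hcnt; simpa [hcnt] using hr
    · exact hRepBig c _ (by omega)
  | succ D ih =>
    intro y t σ htD htσ hinv
    by_cases hSig : (∑ c, t c) = 0
    · have ht0 : ∀ c, t c = 0 := by
        intro c
        have h1 : t c ≤ ∑ c, t c :=
          Finset.single_le_sum (f := t) (fun i _ => Nat.zero_le _) (Finset.mem_univ c)
        omega
      apply iterShuffle_of_rep hE y.length y (le_refl _)
      intro c
      rcases hinv c with ⟨_, r, hr, hcnt⟩ | ⟨_, hcnt⟩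
      · rw [ht0 c] at hcnt; simpa [hcnt] using hr
      · exact hRepBig c _ (by omega)
    · obtain ⟨b, hb⟩ : ∃ b, t b ≠ 0 := by
        by_contra hcon
        push_neg at hcon
        exact hSig (Finset.sum_eq_zero (fun c _ => hcon c))
      have hinvb : σ b = 0 ∧ ∃ r, Rep (E b) r ∧ List.count b y = t b + r := by
        rcases hinv b with h | ⟨h, _⟩
        · exact h
        · exact absurd h hb
      obtain ⟨hσb, r, hrep_r, hcntb⟩ := hinvb
      obtain ⟨c, hcpos⟩ : ∃ c, σ c ≠ 0 := by
        by_contra hcon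
        push_neg at hcon
        have h0 : (∑ c, σ c) = 0 := Finset.sum_eq_zero (fun c _ => hcon c)
        omega
      have hinvc : t c = 0 ∧ m * σ c + (m * m - m) ≤ List.count c y := by
        rcases hinv c with ⟨h, _⟩ | h
        · exact absurd h hcpos
        · exact h
      obtain ⟨htc, hcntc⟩ := hinvc
      have hbc : b ≠ c := by
        intro h; rw [h] at hb; exact hb htc
      obtain ⟨i, j, hi, hj, hw1, hw2⟩ := hPair b c hbc
      have hmm : 2 * m ≤ m * m := by nlinarith
      have hmσ : m ≤ m * σ c := Nat.le_mul_of_pos_right m (by omega)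
      have hij : i + j ≤ List.count c y := by omega
      have hbpos : 1 ≤ List.count b y := by omega
      obtain ⟨u, huS, w, hsh, hcb, hcc, hcx⟩ := single_move hbc hw1 hw2 hbpos hij
      set t' := Function.update t b (t b - 1) with ht'def
      set σ' := Function.update σ c (σ c - 1) with hσ'def
      have hsum_t : (∑ x, t' x) + 1 = ∑ x, t x := by
        rw [ht'def, Finset.sum_update_of_mem (Finset.mem_univ b), ← Finset.erase_eq]
        have h2 : ∑ x ∈ Finset.univ.erase b, t x + t b = ∑ x, t x :=
          Finset.sum_erase_add _ _ (Finset.mem_univ b)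
        omega
      have hsum_σ : (∑ x, σ' x) + 1 = ∑ x, σ x := by
        rw [hσ'def, Finset.sum_update_of_mem (Finset.mem_univ c), ← Finset.erase_eq]
        have h2 : ∑ x ∈ Finset.univ.erase c, σ x + σ c = ∑ x, σ x :=
          Finset.sum_erase_add _ _ (Finset.mem_univ c)
        omega
      apply IterShuffle.step huS _ hsh
      apply ih w t' σ' (by omega) (by omega)
      intro x
      by_cases hxb : x = b
      · subst hxb
        left
        refine ⟨by rw [hσ'def, Function.update_of_ne hbc]; exact hσb, r, hrep_r, ?_⟩
        rw [ht'def, Function.update_self]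
        omega
      · by_cases hxc : x = c
        · subst hxc
          right
          constructor
          · rw [ht'def, Function.update_of_ne hxb]; exact htc
          · rw [hσ'def, Function.update_self]
            obtain ⟨s', hs'⟩ : ∃ s', σ x = s' + 1 := ⟨σ x - 1, by omega⟩
            have h7 : m * σ x = m * s' + m := by rw [hs']; ring
            have h8 : σ x - 1 = s' := by omega
            rw [h8]
            have h10 : m * s' + (m * m - m) + m ≤ List.count x y := by omega
            rcases hcc with h9 | h9 <;> omega
        · rcases hinv x with ⟨h1, r', hr', hcnt'⟩ | ⟨h1, h2⟩
          · left
            refine ⟨by rw [hσ'def, Function.update_of_ne hxc]; exact h1, r', hr', ?_⟩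
            rw [ht'def, Function.update_of_ne hxb, hcx x hxb hxc]
            exact hcnt'
          · right
            constructor
            · rw [ht'def, Function.update_of_ne hxb]; exact h1
            · rw [hσ'def, Function.update_of_ne hxc, hcx x hxb hxc]
              exact h2

set_option maxHeartbeats 1000000 in
/-- The key counting inequality. -/
lemma arith_key {q : ℕ} (m : ℕ) (hm : 2 ≤ m) (hq : 1 ≤ q)
    (v t σ : Fin q → ℕ)
    (hsum : 2 * q * (m * m) ≤ m * m + q * m + ∑ c, v c)
    (ht0 : ∀ c, m * m - m ≤ v c → t c = 0)
    (htm : ∀ c, t c ≤ m)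
    (htv : ∀ c, t c ≤ v c)
    (hσhigh : ∀ c, m * m - m ≤ v c → v c < m * σ c + (m * m - m) + m)
    (hσ0 : ∀ c, ¬ m * m - m ≤ v c → σ c = 0) :
    ∑ c, t c ≤ ∑ c, σ c := by
  classical
  by_contra hcon
  push_neg at hcon
  have hmle : m ≤ m * m := Nat.le_mul_of_pos_left m (by omega)
  set F := Finset.univ.filter (fun c => m * m - m ≤ v c) with hF
  set R := Finset.univ.filter (fun c => ¬ (m * m - m ≤ v c) ∧ 1 ≤ v c) with hR
  have hmemF : ∀ c, c ∈ F ↔ m * m - m ≤ v c := by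
    intro c; rw [hF]; simp
  have hmemR : ∀ c, c ∈ R ↔ (¬ (m * m - m ≤ v c) ∧ 1 ≤ v c) := by
    intro c; rw [hR]; simp
  have hdisj : Disjoint F R := by
    rw [Finset.disjoint_left]
    intro c hcF hcR
    exact ((hmemR c).mp hcR).1 ((hmemF c).mp hcF)
  have hsplit_σ : (∑ c, σ c) = ∑ c ∈ F, σ c := by
    refine (Finset.sum_subset (Finset.subset_univ F) ?_).symm
    intro c _ hc
    exact hσ0 c (fun h => hc ((hmemF c).mpr h))
  have hsplit_t : (∑ c, t c) = ∑ c ∈ R, t c := by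
    refine (Finset.sum_subset (Finset.subset_univ R) ?_).symm
    intro c _ hc
    by_cases h1 : m * m - m ≤ v c
    · exact ht0 c h1
    · have h2 : ¬ 1 ≤ v c := fun h => hc ((hmemR c).mpr ⟨h1, h⟩)
      have := htv c
      omega
  have hsplit_v : (∑ c, v c) = (∑ c ∈ F, v c) + (∑ c ∈ R, v c) := by
    rw [← Finset.sum_union hdisj]
    refine (Finset.sum_subset (Finset.subset_univ _) ?_).symm
    intro c _ hc
    rw [Finset.mem_union] at hc
    push_neg at hc
    have h1 := fun h => hc.1 ((hmemF c).mpr h)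
    have h2 := fun h => hc.2 ((hmemR c).mpr h)
    by_contra h3
    exact h2 ⟨h1, by omega⟩
  have hVF : (∑ c ∈ F, v c) + F.card ≤ m * (∑ c ∈ F, σ c) + F.card * (m * m) := by
    have h2 : ∀ c ∈ F, v c + 1 ≤ m * σ c + m * m := by
      intro c hc
      have := hσhigh c ((hmemF c).mp hc)
      omega
    calc (∑ c ∈ F, v c) + F.card = ∑ c ∈ F, (v c + 1) := by
          rw [Finset.sum_add_distrib, Finset.sum_const, smul_eq_mul, mul_one]
    _ ≤ ∑ c ∈ F, (m * σ c + m * m) := Finset.sum_le_sum h2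
    _ = m * (∑ c ∈ F, σ c) + F.card * (m * m) := by
        rw [Finset.sum_add_distrib, Finset.sum_const, smul_eq_mul, Finset.mul_sum]
  have hVR : (∑ c ∈ R, v c) + m * (∑ c ∈ R, t c) + R.card + R.card * m
      ≤ R.card * (2 * (m * m)) := by
    have h1 : ∀ c ∈ R, v c + m * t c + (1 + m) ≤ 2 * (m * m) := by
      intro c hc
      have hvc : v c + m < m * m := by
        have := ((hmemR c).mp hc).1
        omega
      have h2 : m * t c ≤ m * m := Nat.mul_le_mul_left m (htm c)
      omega
    calc (∑ c ∈ R, v c) + m * (∑ c ∈ R, t c) + R.card + R.card * m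
        = ∑ c ∈ R, (v c + m * t c + (1 + m)) := by
          rw [Finset.sum_add_distrib, Finset.sum_add_distrib, Finset.mul_sum,
            Finset.sum_const, smul_eq_mul]
          ring
    _ ≤ ∑ c ∈ R, 2 * (m * m) := Finset.sum_le_sum h1
    _ = R.card * (2 * (m * m)) := by rw [Finset.sum_const, smul_eq_mul]
  have hcard : F.card + R.card ≤ q := by
    have h1 : (F ∪ R).card = F.card + R.card := Finset.card_union_of_disjoint hdisj
    have h2 : (F ∪ R).card ≤ (Finset.univ : Finset (Fin q)).card :=
      Finset.card_le_card (Finset.subset_univ _)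
    simp only [Finset.card_univ, Fintype.card_fin] at h2
    omega
  have hs1 : 1 ≤ F.card := by
    by_contra hs
    push_neg at hs
    have hFe : F = ∅ := Finset.card_eq_zero.mp (by omega)
    have hvb : ∀ c ∈ Finset.univ, v c + (m + 1) ≤ m * m := by
      intro c _
      have h3 : c ∉ F := by rw [hFe]; simp
      have h4 : ¬ (m * m - m ≤ v c) := fun h => h3 ((hmemF c).mpr h)
      omega
    have h2 : (∑ c : Fin q, (v c + (m + 1))) ≤ ∑ c : Fin q, m * m :=
      Finset.sum_le_sum hvb
    rw [Finset.sum_add_distrib, Finset.sum_const, Finset.sum_const, Finset.card_univ,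
      Fintype.card_fin, smul_eq_mul, smul_eq_mul] at h2
    -- ∑ v + q * (m+1) ≤ q * (m*m)
    have e1 : ((∑ c, v c : ℕ) : ℤ) + q * (m + 1) ≤ q * (m * m) := by exact_mod_cast h2
    have e2 : 2 * (q : ℤ) * (m * m) ≤ m * m + q * m + ((∑ c, v c : ℕ) : ℤ) := by
      exact_mod_cast hsum
    have e7 : (1 : ℤ) ≤ q := by exact_mod_cast hq
    have e8 : (2 : ℤ) ≤ m := by exact_mod_cast hm
    nlinarith [mul_nonneg (by linarith : (0:ℤ) ≤ (q:ℤ) - 1) (by nlinarith : (0:ℤ) ≤ (m:ℤ) * m)]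
  -- final contradiction, in ℤ
  have e1 : ((∑ c ∈ F, v c : ℕ) : ℤ) + F.card ≤ m * (∑ c ∈ F, σ c : ℕ) + F.card * (m * m) := by
    exact_mod_cast hVF
  have e2 : ((∑ c ∈ R, v c : ℕ) : ℤ) + m * (∑ c ∈ R, t c : ℕ) + R.card + R.card * m
      ≤ R.card * (2 * (m * m)) := by exact_mod_cast hVR
  have e3 : ((∑ c ∈ F, σ c : ℕ) : ℤ) + 1 ≤ (∑ c ∈ R, t c : ℕ) := by
    have h0 : (∑ c ∈ F, σ c) + 1 ≤ (∑ c ∈ R, t c) := by omega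
    exact_mod_cast h0
  have e4 : 2 * (q : ℤ) * (m * m) ≤ m * m + q * m +
      (((∑ c ∈ F, v c : ℕ) : ℤ) + ((∑ c ∈ R, v c : ℕ) : ℤ)) := by
    have h0 : 2 * q * (m * m) ≤ m * m + q * m + ((∑ c ∈ F, v c) + (∑ c ∈ R, v c)) := by omega
    exact_mod_cast h0
  have e5 : (F.card : ℤ) + R.card ≤ q := by exact_mod_cast hcard
  have e6 : (1 : ℤ) ≤ F.card := by exact_mod_cast hs1
  have e7 : (1 : ℤ) ≤ q := by exact_mod_cast hq
  have e8 : (2 : ℤ) ≤ m := by exact_mod_cast hm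
  have e9 : (0 : ℤ) ≤ (∑ c ∈ R, t c : ℕ) := by positivity
  have e10 : (0 : ℤ) ≤ (R.card : ℤ) := by positivity
  nlinarith [mul_nonneg (by linarith : (0:ℤ) ≤ (F.card:ℤ) - 1)
      (by nlinarith : (0:ℤ) ≤ (m:ℤ) * m - m),
    mul_nonneg (by linarith : (0:ℤ) ≤ (q:ℤ) - F.card - R.card)
      (by nlinarith : (0:ℤ) ≤ 2 * ((m:ℤ) * m) - m - 1)]

end AuxProof

open AuxProof in
/-- **Corollary.** Let `q ≥ 1` and let `S` be a finite set of words over a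
`q`-letter alphabet such that `S^†` is co-finite, and let `n` be the length of a
longest word in `S`.  Then every word of length strictly greater than
`(2q-1)n² - (5q-2)n + 3q - 2` belongs to `S^†` (equivalently, the length of a
longest word not in `S^†` is at most that quantity). -/
theorem longest_missing_le (q : ℕ) (hq : 1 ≤ q)
    (S : Set (List (Fin q))) (hS : S.Finite)
    (hcof : {w : List (Fin q) | ¬ IterShuffle S w}.Finite)
    (n : ℕ) (hmem : ∃ w ∈ S, w.length = n) (hmax : ∀ w ∈ S, w.length ≤ n) :
    ∀ y : List (Fin q),
      (2 * (q : ℤ) - 1) * (n : ℤ) ^ 2 - (5 * (q : ℤ) - 2) * (n : ℤ) + 3 * (q : ℤ) - 2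
        < (y.length : ℤ) →
      IterShuffle S y := by
  intro y hy
  classical
  -- the cofiniteness bound
  set M := hcof.toFinset.sup List.length + 1 with hM_def
  have hM : ∀ z : List (Fin q), M ≤ z.length → IterShuffle S z := by
    intro z hz
    by_contra hcz
    have h1 : z ∈ hcof.toFinset := (Set.Finite.mem_toFinset hcof).mpr hcz
    have h2 : z.length ≤ hcof.toFinset.sup List.length := Finset.le_sup h1
    omega
  set E : Fin q → Set ℕ := fun c => {e | 1 ≤ e ∧ List.replicate e c ∈ S} with hE_def
  have hE : ∀ c e, e ∈ E c → 1 ≤ e ∧ List.replicate e c ∈ S := fun c e he => he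
  have hEn : ∀ c, ∀ e ∈ E c, 1 ≤ e ∧ e ≤ n := by
    intro c e he
    refine ⟨he.1, ?_⟩
    have := hmax _ he.2
    simpa using this
  have htail : ∀ c k, M ≤ k → Rep (E c) k := by
    intro c k hk
    have h1 : IterShuffle S (List.replicate k c) := hM _ (by simpa)
    have h2 := rep_of_unary h1 c (fun x hx => List.eq_of_mem_replicate hx)
    simpa using h2
  set m := n - 1 with hm_def
  have hmsub : m * (m - 1) = m * m - m := by rw [Nat.mul_sub]; simp
  have hRepBig : ∀ c k, m * m - m ≤ k → Rep (E c) k := by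
    intro c k hk
    apply rep_large (hEn c) (htail c)
    have h1 : n - 2 = m - 1 := by omega
    rw [(by omega : n - 1 = m), h1, hmsub]
    exact hk
  -- the length hypothesis in the needed form
  have hsum : 2 * q * (m * m) ≤ m * m + q * m + y.length := by
    rcases Nat.eq_zero_or_pos n with hn | hn
    · have hm0 : m = 0 := by omega
      rw [hm0]
      simp
    · have hcast : (m : ℤ) = (n : ℤ) - 1 := by
        rw [hm_def]
        push_cast [Nat.cast_sub hn]
        ring
      have hz : 2 * (q:ℤ) * ((m:ℤ) * m) ≤ (m:ℤ) * m + (q:ℤ) * m + (y.length : ℤ) := by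
        rw [hcast]
        nlinarith [hy]
      exact_mod_cast hz
  have hlen_sum : y.length = ∑ c, List.count c y := length_eq_sum_count y
  rcases lt_or_ge m 2 with hm2 | hm2
  · -- tiny case: every count is representable
    apply iterShuffle_of_rep hE y.length y (le_refl _)
    intro c
    apply hRepBig
    have : m * m - m = 0 := by interval_cases m <;> rfl
    omega
  · -- main case
    have hPair : ∀ b c : Fin q, b ≠ c → ∃ i j, i ≤ m ∧ j ≤ m ∧
        (List.replicate i c ++ [b]) ∈ S ∧ (b :: List.replicate j c) ∈ S := by
      intro b c hbc
      obtain ⟨i, j, hi, hj, h1, h2⟩ := pair_words hM hmax b c hbc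
      exact ⟨i, j, by omega, by omega, h1, h2⟩
    have hE0 : ∀ c : Fin q, ∃ e₀, e₀ ∈ E c ∧ 1 ≤ e₀ ∧ e₀ ≤ n := by
      intro c
      obtain ⟨e₀, he₀⟩ := rep_elt (htail c (M + 1) (by omega)) (by omega)
      exact ⟨e₀, he₀, (hEn c e₀ he₀).1, (hEn c e₀ he₀).2⟩
    choose e₀ he₀E he₀1 he₀n using hE0
    have hgap : ∀ c : Fin q, ∃ tc rc, Rep (E c) rc ∧ List.count c y = tc + rc ∧
        tc ≤ List.count c y ∧ tc + 1 ≤ e₀ c := by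
      intro c
      obtain ⟨tc, rc, h1, h2, h3, h4⟩ := rep_gap (he₀E c) (he₀1 c) (List.count c y)
      exact ⟨tc, rc, h1, h2, h3, h4⟩
    choose tf rf hrf hcnt htle htb using hgap
    set t : Fin q → ℕ := fun c => if m * m - m ≤ List.count c y then 0 else tf c with ht_def
    set σ : Fin q → ℕ := fun c =>
      if m * m - m ≤ List.count c y then (List.count c y - (m * m - m)) / m else 0 with hσ_def
    have hts : ∑ c, t c ≤ ∑ c, σ c := by
      apply arith_key m hm2 hq (fun c => List.count c y) t σ
      · omega
      · intro c hc; rw [ht_def]; simp only [if_pos hc]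
      · intro c
        rw [ht_def]
        by_cases hc : m * m - m ≤ List.count c y
        · simp only [if_pos hc]; omega
        · simp only [if_neg hc]
          have h1 := htb c
          have h2 := he₀n c
          omega
      · intro c
        rw [ht_def]
        by_cases hc : m * m - m ≤ List.count c y
        · simp only [if_pos hc]; omega
        · simp only [if_neg hc]; exact htle c
      · intro c hc
        rw [hσ_def]
        simp only [if_pos hc]
        have hdm := Nat.div_add_mod (List.count c y - (m * m - m)) m
        have hmod : (List.count c y - (m * m - m)) % m < m := Nat.mod_lt _ (by omega)
        omega
      · intro c hc; rw [hσ_def]; simp only [if_neg hc]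
    apply main_P1 hm2 hE hRepBig hPair (∑ c, t c) y t σ (le_refl _) hts
    intro c
    by_cases hc : m * m - m ≤ List.count c y
    · right
      constructor
      · rw [ht_def]; simp only [if_pos hc]
      · rw [hσ_def]
        simp only [if_pos hc]
        have hdm := Nat.div_add_mod (List.count c y - (m * m - m)) m
        have h1 : m * ((List.count c y - (m * m - m)) / m) ≤ List.count c y - (m * m - m) := by
          omega
        omega
    · left
      constructor
      · rw [hσ_def]; simp only [if_neg hc]
      · exact ⟨rf c, hrf c, by rw [ht_def]; simp only [if_neg hc]; exact hcnt c⟩
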